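/- Every formula ψ in the bounded fragment of quantifier rank at most k is invariant under k-generated substructures: for all m-pointed structures (A,ā), (A,ā) ⊨ ψ iff Rk(A,ā) ⊨ ψ. -/

import Mathlib

/-- A structure over a bounded vocabulary: relations `R` with arities `ar`,
binary transition relations indexed by `τ`, and `m` distinguished constants. -/
structure BStr (R : Type) (ar : R → ℕ) (τ : Type) (m : ℕ) where
  W : Type
  rel : ∀ r : R, (Fin (ar r) → W) → Prop
  tr : τ → W → W → Prop
  c : Fin m → W

variable {R : Type} {ar : R → ℕ} {τ : Type} {m : ℕ}

/-- Terms: constants or variables. -/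
abbrev Tm (m n : ℕ) : Type := Fin m ⊕ Fin n

/-- Evaluation of terms. -/
def tmEval (A : BStr R ar τ m) {n : ℕ} (v : Fin n → A.W) : Tm m n → A.W :=
  Sum.elim A.c v

/-- The bounded fragment: quantifiers are relativized to transition relations,
`∃x.(E(t,x) ∧ φ)` and `∀x.(E(t,x) → φ)` with `t` a term not equal to the bound
variable (guaranteed here since `t` lives in the outer context). -/
inductive BFO (R : Type) (ar : R → ℕ) (τ : Type) (m : ℕ) : ℕ → Type
  | rel {n : ℕ} (r : R) (t : Fin (ar r) → Tm m n) : BFO R ar τ m n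
  | tr {n : ℕ} (e : τ) (t u : Tm m n) : BFO R ar τ m n
  | eq {n : ℕ} (t u : Tm m n) : BFO R ar τ m n
  | not {n : ℕ} (φ : BFO R ar τ m n) : BFO R ar τ m n
  | and {n : ℕ} (φ ψ : BFO R ar τ m n) : BFO R ar τ m n
  | or {n : ℕ} (φ ψ : BFO R ar τ m n) : BFO R ar τ m n
  | bex {n : ℕ} (e : τ) (t : Tm m n) (φ : BFO R ar τ m (n + 1)) : BFO R ar τ m n
  | ball {n : ℕ} (e : τ) (t : Tm m n) (φ : BFO R ar τ m (n + 1)) : BFO R ar τ m n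

/-- Satisfaction for the bounded fragment. -/
def BFO.Sat (A : BStr R ar τ m) : ∀ {n : ℕ}, BFO R ar τ m n → (Fin n → A.W) → Prop
  | _, .rel r t, v => A.rel r fun i => tmEval A v (t i)
  | _, .tr e t u, v => A.tr e (tmEval A v t) (tmEval A v u)
  | _, .eq t u, v => tmEval A v t = tmEval A v u
  | _, .not φ, v => ¬ BFO.Sat A φ v
  | _, .and φ ψ, v => BFO.Sat A φ v ∧ BFO.Sat A ψ v
  | _, .or φ ψ, v => BFO.Sat A φ v ∨ BFO.Sat A ψ v
  | _, .bex e t φ, v => ∃ w : A.W, A.tr e (tmEval A v t) w ∧ BFO.Sat A φ (Fin.snoc v w)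
  | _, .ball e t φ, v => ∀ w : A.W, A.tr e (tmEval A v t) w → BFO.Sat A φ (Fin.snoc v w)

/-- Quantifier rank for the bounded fragment. -/
def BFO.qr : ∀ {n : ℕ}, BFO R ar τ m n → ℕ
  | _, .rel _ _ => 0
  | _, .tr _ _ _ => 0
  | _, .eq _ _ => 0
  | _, .not φ => φ.qr
  | _, .and φ ψ => max φ.qr ψ.qr
  | _, .or φ ψ => max φ.qr ψ.qr
  | _, .bex _ _ φ => φ.qr + 1
  | _, .ball _ _ φ => φ.qr + 1

/-- Satisfaction of a bounded sentence. -/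
def BFO.SatS (A : BStr R ar τ m) (φ : BFO R ar τ m 0) : Prop :=
  BFO.Sat A φ (fun i => i.elim0)

/-- Elements reachable from the constants in at most `k` steps along transition
relations. -/
def reachN (A : BStr R ar τ m) : ℕ → Set A.W
  | 0 => Set.range A.c
  | n + 1 => reachN A n ∪ {w | ∃ v ∈ reachN A n, ∃ e, A.tr e v w}

theorem c_mem_reachN (A : BStr R ar τ m) (k : ℕ) (i : Fin m) :
    A.c i ∈ reachN A k := by
  induction k with
  | zero => exact ⟨i, rfl⟩
  | succ k ih => exact Or.inl ih

/-- The `k`-reachability comonad `Rk`: the induced substructure on the elements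
reachable from the distinguished tuple in at most `k` transition steps. -/
def RkStr (A : BStr R ar τ m) (k : ℕ) : BStr R ar τ m where
  W := {w : A.W // w ∈ reachN A k}
  rel r t := A.rel r fun i => (t i).1
  tr e x y := A.tr e x.1 y.1
  c i := ⟨A.c i, c_mem_reachN A k i⟩


theorem reachN_mono (A : BStr R ar τ m) {j k : ℕ} (h : j ≤ k) :
    reachN A j ⊆ reachN A k := by
  induction k with
  | zero => rw [Nat.le_zero.mp h]
  | succ k ih =>
    rcases Nat.lt_or_ge j (k+1) with h' | h'
    · exact fun w hw => Or.inl (ih (Nat.lt_succ_iff.mp h') hw)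
    · rw [Nat.le_antisymm h h']

theorem tmEval_Rk (A : BStr R ar τ m) (k : ℕ) {n : ℕ} (v : Fin n → A.W)
    (v' : Fin n → (RkStr A k).W) (hv : ∀ i, (v' i).1 = v i) (t : Tm m n) :
    (tmEval (RkStr A k) v' t).1 = tmEval A v t := by
  cases t with
  | inl i => rfl
  | inr i => exact hv i

theorem bfo_key (A : BStr R ar τ m) (k : ℕ) :
    ∀ {n : ℕ} (φ : BFO R ar τ m n) (j : ℕ), j + φ.qr ≤ k →
    ∀ (v : Fin n → A.W) (v' : Fin n → (RkStr A k).W),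
      (∀ i, (v' i).1 = v i) → (∀ i, v i ∈ reachN A j) →
      (BFO.Sat A φ v ↔ BFO.Sat (RkStr A k) φ v') := by
  intro n φ
  induction φ with
  | rel r t =>
    intro j hj v v' hv hr
    have heq : (fun i => (tmEval (RkStr A k) v' (t i)).1) = fun i => tmEval A v (t i) :=
      funext fun i => tmEval_Rk A k v v' hv (t i)
    show A.rel r (fun i => tmEval A v (t i)) ↔ A.rel r fun i => (tmEval (RkStr A k) v' (t i)).1
    rw [heq]
  | tr e t u =>
    intro j hj v v' hv hr
    show A.tr e (tmEval A v t) (tmEval A v u) ↔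
      A.tr e (tmEval (RkStr A k) v' t).1 (tmEval (RkStr A k) v' u).1
    rw [tmEval_Rk A k v v' hv t, tmEval_Rk A k v v' hv u]
  | eq t u =>
    intro j hj v v' hv hr
    simp only [BFO.Sat]
    rw [← tmEval_Rk A k v v' hv t, ← tmEval_Rk A k v v' hv u]
    exact ⟨fun h => Subtype.ext h, fun h => congrArg Subtype.val h⟩
  | not φ ih =>
    intro j hj v v' hv hr
    exact not_congr (ih j hj v v' hv hr)
  | and φ ψ ihφ ihψ =>
    intro j hj v v' hv hr
    exact and_congr (ihφ j (le_trans (by simp [BFO.qr, Nat.add_le_add_left, le_max_left]) hj) v v' hv hr)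
      (ihψ j (le_trans (by simp [BFO.qr, Nat.add_le_add_left, le_max_right]) hj) v v' hv hr)
  | or φ ψ ihφ ihψ =>
    intro j hj v v' hv hr
    exact or_congr (ihφ j (le_trans (by simp [BFO.qr, Nat.add_le_add_left, le_max_left]) hj) v v' hv hr)
      (ihψ j (le_trans (by simp [BFO.qr, Nat.add_le_add_left, le_max_right]) hj) v v' hv hr)
  | bex e t φ ih =>
    intro j hj v v' hv hr
    have hj' : (j + 1) + φ.qr ≤ k := by
      simp only [BFO.qr] at hj; omega
    have ht : tmEval A v t ∈ reachN A j := by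
      cases t with
      | inl i => exact c_mem_reachN A j i
      | inr i => exact hr i
    simp only [BFO.Sat]
    constructor
    · rintro ⟨w, hw, hsat⟩
      have hwj : w ∈ reachN A (j+1) := Or.inr ⟨_, ht, e, hw⟩
      refine ⟨⟨w, reachN_mono A (by omega) hwj⟩, ?_, ?_⟩
      · show A.tr e (tmEval (RkStr A k) v' t).1 w
        rw [tmEval_Rk A k v v' hv t]; exact hw
      · exact (ih (j+1) hj' (Fin.snoc v w) (Fin.snoc v' ⟨w, _⟩)
          (fun i => by
            induction i using Fin.lastCases with
            | last => simp [Fin.snoc]; rfl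
            | cast i => simp [Fin.snoc, hv i])
          (fun i => by
            induction i using Fin.lastCases with
            | last => simpa using hwj
            | cast i => simpa using reachN_mono A (by omega) (hr i))).mp hsat
    · rintro ⟨⟨w, hwk⟩, hw, hsat⟩
      have hw' : A.tr e (tmEval A v t) w := by
        have h2 : A.tr e (tmEval (RkStr A k) v' t).1 w := hw
        rwa [tmEval_Rk A k v v' hv t] at h2
      have hwj : w ∈ reachN A (j+1) := Or.inr ⟨_, ht, e, hw'⟩
      refine ⟨w, hw', ?_⟩
      exact (ih (j+1) hj' (Fin.snoc v w) (Fin.snoc v' ⟨w, hwk⟩)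
          (fun i => by
            induction i using Fin.lastCases with
            | last => simp [Fin.snoc]; rfl
            | cast i => simp [Fin.snoc, hv i])
          (fun i => by
            induction i using Fin.lastCases with
            | last => simpa using hwj
            | cast i => simpa using reachN_mono A (by omega) (hr i))).mpr hsat
  | ball e t φ ih =>
    intro j hj v v' hv hr
    have hj' : (j + 1) + φ.qr ≤ k := by
      simp only [BFO.qr] at hj; omega
    have ht : tmEval A v t ∈ reachN A j := by
      cases t with
      | inl i => exact c_mem_reachN A j i
      | inr i => exact hr i
    simp only [BFO.Sat]
    constructor
    · rintro h ⟨w, hwk⟩ hw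
      have hw' : A.tr e (tmEval A v t) w := by
        have h2 : A.tr e (tmEval (RkStr A k) v' t).1 w := hw
        rwa [tmEval_Rk A k v v' hv t] at h2
      have hwj : w ∈ reachN A (j+1) := Or.inr ⟨_, ht, e, hw'⟩
      exact (ih (j+1) hj' (Fin.snoc v w) (Fin.snoc v' ⟨w, hwk⟩)
          (fun i => by
            induction i using Fin.lastCases with
            | last => simp [Fin.snoc]; rfl
            | cast i => simp [Fin.snoc, hv i])
          (fun i => by
            induction i using Fin.lastCases with
            | last => simpa using hwj
            | cast i => simpa using reachN_mono A (by omega) (hr i))).mp (h w hw')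
    · intro h w hw
      have hwj : w ∈ reachN A (j+1) := Or.inr ⟨_, ht, e, hw⟩
      have hw2 : (RkStr A k).tr e (tmEval (RkStr A k) v' t)
          ⟨w, reachN_mono A (by omega) hwj⟩ := by
        show A.tr e (tmEval (RkStr A k) v' t).1 w
        rw [tmEval_Rk A k v v' hv t]; exact hw
      exact (ih (j+1) hj' (Fin.snoc v w) (Fin.snoc v' ⟨w, _⟩)
          (fun i => by
            induction i using Fin.lastCases with
            | last => simp [Fin.snoc]; rfl
            | cast i => simp [Fin.snoc, hv i])
          (fun i => by
            induction i using Fin.lastCases with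
            | last => simpa using hwj
            | cast i => simpa using reachN_mono A (by omega) (hr i))).mpr
        (h _ hw2)

/-- Every sentence `ψ` of the bounded fragment of quantifier rank at most `k` is
invariant under `k`-generated substructures: for all `m`-pointed structures
`(A,ā)`, `(A,ā) ⊨ ψ` iff `Rk(A,ā) ⊨ ψ`. -/
theorem bounded_fragment_invariant_under_generated_substructures
    (ψ : BFO R ar τ m 0) (k : ℕ) (hqr : ψ.qr ≤ k) :
    ∀ A : BStr R ar τ m, BFO.SatS A ψ ↔ BFO.SatS (RkStr A k) ψ := by
  intro A
  exact bfo_key A k ψ 0 (by simpa using hqr) (fun i => i.elim0) (fun i => i.elim0)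
    (fun i => i.elim0) (fun i => i.elim0)
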